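/- arXiv:2311.06764 — 2 statements merged into one kernel-verified Lean document; each statement's English description precedes it below -/
import Mathlib

section
/- Let P and Q be positive operators and R a bounded operator on a Hilbert space H. The block operator [[P, R], [R*, Q]] on H ⊕ H is positive if and only if there exists a contraction K on H with R = P^{1/2} K Q^{1/2}. -/
variable {H : Type*} [NormedAddCommGroup H] [InnerProductSpace ℂ H] [CompleteSpace H]

/-- The 2×2 block operator `[[A, B], [C, D]]` acting on the Hilbert space direct sum
`H ⊕ H` (realized as `WithLp 2 (H × H)`) by `(h₁, h₂) ↦ (A h₁ + B h₂, C h₁ + D h₂)`. -/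
noncomputable def blk (A B C D : H →L[ℂ] H) :
    WithLp 2 (H × H) →L[ℂ] WithLp 2 (H × H) :=
  (WithLp.prodContinuousLinearEquiv 2 ℂ H H).symm.toContinuousLinearMap.comp
    (((A.comp (ContinuousLinearMap.fst ℂ H H) + B.comp (ContinuousLinearMap.snd ℂ H H)).prod
      (C.comp (ContinuousLinearMap.fst ℂ H H) + D.comp (ContinuousLinearMap.snd ℂ H H))).comp
      (WithLp.prodContinuousLinearEquiv 2 ℂ H H).toContinuousLinearMap)

open ContinuousLinearMap

local notation "⟪" x ", " y "⟫" => @inner ℂ _ _ x y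

private lemma apply_eq_zero_of_mem_perp_range (A : H →L[ℂ] H) (hA : IsSelfAdjoint A) {w : H}
    (hw : w ∈ (LinearMap.range (A : H →ₗ[ℂ] H))ᗮ) : A w = 0 := by
  apply ext_inner_right ℂ
  intro x
  rw [inner_zero_left]
  calc ⟪A w, x⟫ = ⟪ContinuousLinearMap.adjoint A w, x⟫ := by rw [hA.adjoint_eq]
    _ = ⟪w, A x⟫ := adjoint_inner_left A x w
    _ = 0 := Submodule.inner_left_of_mem_orthogonal (LinearMap.mem_range_self _ x) hw

private lemma factor_exists (A : H →L[ℂ] H) (hA : IsSelfAdjoint A) (v : H) (c : ℝ) (hc : 0 ≤ c)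
    (h : ∀ x : H, ‖⟪v, x⟫‖ ≤ c * ‖A x‖) :
    ∃ z : H, z ∈ (LinearMap.range (A : H →ₗ[ℂ] H))ᗮᗮ ∧ A z = v ∧ ‖z‖ ≤ c := by
  set Al : H →ₗ[ℂ] H := (A : H →ₗ[ℂ] H) with hAl
  have hker : LinearMap.ker Al ≤ LinearMap.ker ((innerSL ℂ v) : H →ₗ[ℂ] ℂ) := by
    intro x hx
    have hx' : A x = 0 := hx
    have h2 := h x
    rw [hx', norm_zero, mul_zero] at h2
    simpa [LinearMap.mem_ker] using norm_le_zero_iff.mp h2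
  set f₀lin : LinearMap.range Al →ₗ[ℂ] ℂ :=
    ((LinearMap.ker Al).liftQ ((innerSL ℂ v) : H →ₗ[ℂ] ℂ) hker).comp
      (Al.quotKerEquivRange.symm.toLinearMap) with hf₀lin
  have happly : ∀ (x : H) (hx : Al x ∈ LinearMap.range Al),
      f₀lin ⟨Al x, hx⟩ = ⟪v, x⟫ := by
    intro x hx
    rw [hf₀lin]
    simp only [LinearMap.comp_apply, LinearEquiv.coe_toLinearMap]
    rw [Al.quotKerEquivRange_symm_apply_image x hx]
    simp [Submodule.liftQ_apply]
  have hbound : ∀ u : LinearMap.range Al, ‖f₀lin u‖ ≤ c * ‖(u : H)‖ := by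
    rintro ⟨u, x, rfl⟩
    rw [happly x (LinearMap.mem_range_self _ x)]
    exact h x
  set f₀ : (LinearMap.range Al) →L[ℂ] ℂ := f₀lin.mkContinuous c hbound with hf₀
  obtain ⟨g, hg, hgnorm⟩ := exists_extension_norm_eq (LinearMap.range Al) f₀
  set z₀ := (InnerProductSpace.toDual ℂ H).symm g with hz₀def
  have hz₀ : ∀ x, ⟪z₀, x⟫ = g x := fun x => InnerProductSpace.toDual_symm_apply
  have hAz₀ : A z₀ = v := by
    apply ext_inner_right ℂ
    intro x
    calc ⟪A z₀, x⟫ = ⟪ContinuousLinearMap.adjoint A z₀, x⟫ := by rw [hA.adjoint_eq]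
      _ = ⟪z₀, A x⟫ := adjoint_inner_left A x z₀
      _ = g (A x) := hz₀ _
      _ = f₀ ⟨Al x, LinearMap.mem_range_self _ x⟩ := hg ⟨Al x, LinearMap.mem_range_self _ x⟩
      _ = ⟪v, x⟫ := happly x _
  have hz₀norm : ‖z₀‖ ≤ c := by
    rw [hz₀def, LinearIsometryEquiv.norm_map, hgnorm]
    exact f₀lin.mkContinuous_norm_le hc hbound
  haveI : CompleteSpace ((LinearMap.range Al)ᗮᗮ : Submodule ℂ H) :=
    (Submodule.isClosed_orthogonal _).completeSpace_coe
  haveI hop : Submodule.HasOrthogonalProjection ((LinearMap.range Al)ᗮᗮ) :=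
    Submodule.HasOrthogonalProjection.ofCompleteSpace _
  obtain ⟨z, hzmem, hzperp⟩ := hop.exists_orthogonal z₀
  refine ⟨z, hzmem, ?_, ?_⟩
  · have hdm : z₀ - z ∈ (LinearMap.range Al)ᗮ :=
      Submodule.orthogonal_le (Submodule.le_orthogonal_orthogonal _) hzperp
    have h0 : A (z₀ - z) = 0 := apply_eq_zero_of_mem_perp_range A hA hdm
    rw [map_sub, sub_eq_zero] at h0
    rw [← h0, hAz₀]
  · have horth : ⟪z, z₀ - z⟫ = 0 :=
      Submodule.inner_right_of_mem_orthogonal hzmem hzperp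
    have hsq := norm_add_sq_eq_norm_sq_add_norm_sq_of_inner_eq_zero z (z₀ - z) horth
    rw [add_sub_cancel] at hsq
    nlinarith [norm_nonneg (z₀ - z), norm_nonneg z, norm_nonneg z₀, hz₀norm]

private lemma factor_unique (A : H →L[ℂ] H) (hA : IsSelfAdjoint A) {z₁ z₂ : H}
    (h₁ : z₁ ∈ (LinearMap.range (A : H →ₗ[ℂ] H))ᗮᗮ)
    (h₂ : z₂ ∈ (LinearMap.range (A : H →ₗ[ℂ] H))ᗮᗮ)
    (he : A z₁ = A z₂) : z₁ = z₂ := by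
  have hd : z₁ - z₂ ∈ (LinearMap.range (A : H →ₗ[ℂ] H))ᗮ := by
    rw [Submodule.mem_orthogonal]
    rintro u ⟨x, rfl⟩
    have hux : (A : H →ₗ[ℂ] H) x = A x := rfl
    rw [hux]
    calc ⟪A x, z₁ - z₂⟫ = ⟪ContinuousLinearMap.adjoint A x, z₁ - z₂⟫ := by rw [hA.adjoint_eq]
      _ = ⟪x, A (z₁ - z₂)⟫ := adjoint_inner_left A _ x
      _ = 0 := by rw [map_sub, he, sub_self, inner_zero_right]
  have hd2 : z₁ - z₂ ∈ ((LinearMap.range (A : H →ₗ[ℂ] H))ᗮ)ᗮ := Submodule.sub_mem _ h₁ h₂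
  have h0 : ⟪z₁ - z₂, z₁ - z₂⟫ = 0 :=
    Submodule.inner_right_of_mem_orthogonal hd hd2
  rw [inner_self_eq_zero, sub_eq_zero] at h0
  exact h0

private lemma exists_contraction (sP sQ R : H →L[ℂ] H)
    (hsP : IsSelfAdjoint sP) (hsQ : IsSelfAdjoint sQ)
    (key : ∀ x y : H, ‖⟪R y, x⟫‖ ≤ ‖sP x‖ * ‖sQ y‖) :
    ∃ K : H →L[ℂ] H, ‖K‖ ≤ 1 ∧ R = sP * K * sQ := by
  -- Step 1: T with sP ∘ T = R, ‖T y‖ ≤ ‖sQ y‖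
  have hT : ∀ y : H, ∃ z : H, z ∈ (LinearMap.range (sP : H →ₗ[ℂ] H))ᗮᗮ ∧
      sP z = R y ∧ ‖z‖ ≤ ‖sQ y‖ := by
    intro y
    apply factor_exists sP hsP (R y) (‖sQ y‖) (norm_nonneg _)
    intro x
    calc ‖⟪R y, x⟫‖ ≤ ‖sP x‖ * ‖sQ y‖ := key x y
      _ = ‖sQ y‖ * ‖sP x‖ := mul_comm _ _
  choose T hTmem hTeq hTnorm using hT
  have Tadd : ∀ y y', T (y + y') = T y + T y' := by
    intro y y'
    refine factor_unique sP hsP (hTmem _) (Submodule.add_mem _ (hTmem y) (hTmem y')) ?_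
    rw [hTeq, map_add, map_add, hTeq, hTeq]
  have Tsmul : ∀ (c : ℂ) y, T (c • y) = c • T y := by
    intro c y
    refine factor_unique sP hsP (hTmem _) (Submodule.smul_mem _ c (hTmem y)) ?_
    rw [hTeq, map_smul, map_smul, hTeq]
  set Tlin : H →ₗ[ℂ] H := { toFun := T, map_add' := Tadd, map_smul' := Tsmul } with hTlin
  have hTlinbound : ∀ y, ‖Tlin y‖ ≤ ‖sQ‖ * ‖y‖ := fun y =>
    (hTnorm y).trans (sQ.le_opNorm y)
  set Tc : H →L[ℂ] H := Tlin.mkContinuous ‖sQ‖ hTlinbound with hTc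
  have hTc_apply : ∀ y, Tc y = T y := fun y => rfl
  -- Step 2: S with sQ ∘ S = adjoint Tc, ‖S w‖ ≤ ‖w‖
  have hS : ∀ w : H, ∃ z : H, z ∈ (LinearMap.range (sQ : H →ₗ[ℂ] H))ᗮᗮ ∧
      sQ z = ContinuousLinearMap.adjoint Tc w ∧ ‖z‖ ≤ ‖w‖ := by
    intro w
    apply factor_exists sQ hsQ _ _ (norm_nonneg w)
    intro y
    calc ‖⟪ContinuousLinearMap.adjoint Tc w, y⟫‖ = ‖⟪w, Tc y⟫‖ := by
          rw [adjoint_inner_left]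
      _ ≤ ‖w‖ * ‖Tc y‖ := norm_inner_le_norm _ _
      _ ≤ ‖w‖ * ‖sQ y‖ := by
          apply mul_le_mul_of_nonneg_left _ (norm_nonneg w)
          rw [hTc_apply]; exact hTnorm y
  choose S hSmem hSeq hSnorm using hS
  have Sadd : ∀ w w', S (w + w') = S w + S w' := by
    intro w w'
    refine factor_unique sQ hsQ (hSmem _) (Submodule.add_mem _ (hSmem w) (hSmem w')) ?_
    rw [hSeq, map_add, map_add, hSeq, hSeq]
  have Ssmul : ∀ (c : ℂ) w, S (c • w) = c • S w := by
    intro c w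
    refine factor_unique sQ hsQ (hSmem _) (Submodule.smul_mem _ c (hSmem w)) ?_
    rw [hSeq, map_smul, map_smul, hSeq]
  set Slin : H →ₗ[ℂ] H := { toFun := S, map_add' := Sadd, map_smul' := Ssmul } with hSlin
  have hSlinbound : ∀ w, ‖Slin w‖ ≤ 1 * ‖w‖ := fun w => by
    rw [one_mul]; exact hSnorm w
  set Sc : H →L[ℂ] H := Slin.mkContinuous 1 hSlinbound with hSc
  refine ⟨ContinuousLinearMap.adjoint Sc, ?_, ?_⟩
  · rw [LinearIsometryEquiv.norm_map]
    exact Slin.mkContinuous_norm_le zero_le_one hSlinbound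
  · have hcomp : sQ.comp Sc = ContinuousLinearMap.adjoint Tc := by
      ext w
      exact hSeq w
    have hadj := congrArg ContinuousLinearMap.adjoint hcomp
    rw [adjoint_comp, adjoint_adjoint, hsQ.adjoint_eq] at hadj
    -- hadj : (adjoint Sc).comp sQ = Tc
    ext y
    have h1 : (ContinuousLinearMap.adjoint Sc) (sQ y) = Tc y := by
      rw [← hadj]; rfl
    calc R y = sP (T y) := (hTeq y).symm
      _ = sP ((ContinuousLinearMap.adjoint Sc) (sQ y)) := by rw [h1, hTc_apply]
      _ = (sP * ContinuousLinearMap.adjoint Sc * sQ) y := rfl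

private lemma blk_inner (A B C D : H →L[ℂ] H) (v w : WithLp 2 (H × H)) :
    ⟪blk A B C D v, w⟫ = ⟪A v.fst + B v.snd, w.fst⟫ + ⟪C v.fst + D v.snd, w.snd⟫ := rfl

private lemma blk_inner' (A B C D : H →L[ℂ] H) (v w : WithLp 2 (H × H)) :
    ⟪v, blk A B C D w⟫ = ⟪v.fst, A w.fst + B w.snd⟫ + ⟪v.snd, C w.fst + D w.snd⟫ := rfl

private lemma blk_selfAdjoint (P Q R : H →L[ℂ] H) (hP : IsSelfAdjoint P)
    (hQ : IsSelfAdjoint Q) :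
    IsSelfAdjoint (blk P R (ContinuousLinearMap.adjoint R) Q) := by
  rw [isSelfAdjoint_iff_isSymmetric]
  intro v w
  show ⟪blk P R (ContinuousLinearMap.adjoint R) Q v, w⟫
      = ⟪v, blk P R (ContinuousLinearMap.adjoint R) Q w⟫
  rw [blk_inner, blk_inner']
  rw [inner_add_left, inner_add_left, inner_add_right, inner_add_right,
    show (⟪P v.fst, w.fst⟫ : ℂ) = ⟪v.fst, P w.fst⟫ from hP.isSymmetric v.fst w.fst,
    show (⟪Q v.snd, w.snd⟫ : ℂ) = ⟪v.snd, Q w.snd⟫ from hQ.isSymmetric v.snd w.snd,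
    adjoint_inner_left, adjoint_inner_right]
  ring

private lemma blk_re_self (P Q R sP sQ : H →L[ℂ] H)
    (hsP : IsSelfAdjoint sP) (hsP2 : sP * sP = P)
    (hsQ : IsSelfAdjoint sQ) (hsQ2 : sQ * sQ = Q) (v : WithLp 2 (H × H)) :
    RCLike.re ⟪blk P R (ContinuousLinearMap.adjoint R) Q v, v⟫
      = ‖sP v.fst‖ ^ 2 + ‖sQ v.snd‖ ^ 2 + 2 * RCLike.re ⟪R v.snd, v.fst⟫ := by
  rw [blk_inner, inner_add_left, inner_add_left]
  have hPa : ⟪P v.fst, v.fst⟫ = ⟪sP v.fst, sP v.fst⟫ := by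
    rw [← hsP2]; exact hsP.isSymmetric (sP v.fst) v.fst
  have hQb : ⟪Q v.snd, v.snd⟫ = ⟪sQ v.snd, sQ v.snd⟫ := by
    rw [← hsQ2]; exact hsQ.isSymmetric (sQ v.snd) v.snd
  rw [hPa, hQb, adjoint_inner_left]
  simp only [map_add, inner_self_eq_norm_sq]
  rw [inner_re_symm v.fst (R v.snd)]
  ring

theorem stmt_7 (P Q R sP sQ : H →L[ℂ] H) (hP : P.IsPositive) (hQ : Q.IsPositive)
    (hsP : sP.IsPositive) (hsP2 : sP * sP = P)
    (hsQ : sQ.IsPositive) (hsQ2 : sQ * sQ = Q) :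
    (blk P R (ContinuousLinearMap.adjoint R) Q).IsPositive ↔
      ∃ K : H →L[ℂ] H, ‖K‖ ≤ 1 ∧ R = sP * K * sQ := by
  constructor
  · intro hpos
    apply exists_contraction sP sQ R hsP.isSelfAdjoint hsQ.isSelfAdjoint
    intro x y
    set r : ℂ := ⟪R y, x⟫ with hr
    set a : ℝ := ‖sP x‖ with ha
    set b : ℝ := ‖sQ y‖ with hb
    have hq : ∀ t : ℝ, 0 ≤ t ^ 2 * ‖r‖ ^ 2 * a ^ 2 + b ^ 2 - 2 * (t * ‖r‖ ^ 2) := by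
      intro t
      set c : ℂ := -(t : ℂ) * (starRingEnd ℂ) r with hc
      have h2 := hpos.2 ((WithLp.equiv 2 (H × H)).symm (c • x, y))
      rw [reApplyInnerSelf_apply, blk_re_self P Q R sP sQ hsP.isSelfAdjoint hsP2 hsQ.isSelfAdjoint hsQ2] at h2
      have e1 : ((WithLp.equiv 2 (H × H)).symm (c • x, y)).fst = c • x := rfl
      have e2 : ((WithLp.equiv 2 (H × H)).symm (c • x, y)).snd = y := rfl
      rw [e1, e2] at h2
      rw [map_smul, norm_smul, inner_smul_right, ← hr, ← ha, ← hb] at h2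
      have hcr : c * r = ((-(t * ‖r‖ ^ 2) : ℝ) : ℂ) := by
        have hconj : (starRingEnd ℂ) r * r = ((‖r‖ ^ 2 : ℝ) : ℂ) := by
          rw [RCLike.conj_mul]; norm_cast
        calc c * r = -(t : ℂ) * ((starRingEnd ℂ) r * r) := by rw [hc]; ring
          _ = -(t : ℂ) * ((‖r‖ ^ 2 : ℝ) : ℂ) := by rw [hconj]
          _ = ((-(t * ‖r‖ ^ 2) : ℝ) : ℂ) := by push_cast; ring
      have hcnorm : ‖c‖ = |t| * ‖r‖ := by
        rw [hc, norm_mul, norm_neg, RCLike.norm_conj, Complex.norm_real, Real.norm_eq_abs]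
      rw [hcr, hcnorm] at h2
      have hre : RCLike.re ((-(t * ‖r‖ ^ 2) : ℝ) : ℂ) = -(t * ‖r‖ ^ 2) := by
        exact RCLike.ofReal_re _
      rw [hre] at h2
      have habs : (|t| * ‖r‖) ^ 2 = t ^ 2 * ‖r‖ ^ 2 := by
        rw [mul_pow, sq_abs]
      nlinarith [h2]
    by_cases hn : ‖r‖ = 0
    · rw [hn]; exact mul_nonneg (norm_nonneg _) (norm_nonneg _)
    · have hnpos : 0 < ‖r‖ := lt_of_le_of_ne (norm_nonneg _) (Ne.symm hn)
      by_cases hA : a = 0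
      · exfalso
        have hr2 : ‖r‖ ^ 2 ≠ 0 := pow_ne_zero 2 hn
        have h3 := hq ((b ^ 2 + 1) / ‖r‖ ^ 2)
        rw [hA] at h3
        have h4 : (b ^ 2 + 1) / ‖r‖ ^ 2 * ‖r‖ ^ 2 = b ^ 2 + 1 := div_mul_cancel₀ _ hr2
        rw [h4] at h3
        nlinarith [h3]
      · have hApos : 0 < a := lt_of_le_of_ne (norm_nonneg _) (Ne.symm hA)
        have h3 := hq (1 / a ^ 2)
        have h4 : (1 / a ^ 2) ^ 2 * ‖r‖ ^ 2 * a ^ 2 = ‖r‖ ^ 2 / a ^ 2 := by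
          field_simp
        have h5 : (1 / a ^ 2) * ‖r‖ ^ 2 = ‖r‖ ^ 2 / a ^ 2 := by field_simp
        rw [h4, h5] at h3
        -- 0 ≤ ‖r‖²/a² + b² - 2‖r‖²/a²  ⇒  ‖r‖² ≤ a² b²
        have h6 : ‖r‖ ^ 2 ≤ a ^ 2 * b ^ 2 := by
          have h7 : ‖r‖ ^ 2 / a ^ 2 ≤ b ^ 2 := by linarith
          rw [div_le_iff₀ (by positivity)] at h7
          linarith [h7]
        nlinarith [hnpos, hApos, mul_nonneg hApos.le (norm_nonneg (sQ y))]
  · rintro ⟨K, hK, rfl⟩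
    refine ⟨(blk_selfAdjoint P Q _ hP.isSelfAdjoint hQ.isSelfAdjoint).isSymmetric, ?_⟩
    intro v
    rw [reApplyInnerSelf_apply, blk_re_self P Q _ sP sQ hsP.isSelfAdjoint hsP2 hsQ.isSelfAdjoint hsQ2]
    have h1 : ((sP * K * sQ) v.snd : H) = sP (K (sQ v.snd)) := rfl
    have h2 : (⟪(sP * K * sQ) v.snd, v.fst⟫ : ℂ) = ⟪K (sQ v.snd), sP v.fst⟫ := by
      rw [h1]
      exact hsP.isSelfAdjoint.isSymmetric (K (sQ v.snd)) v.fst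
    have h3 : ‖(⟪K (sQ v.snd), sP v.fst⟫ : ℂ)‖ ≤ ‖sQ v.snd‖ * ‖sP v.fst‖ := by
      calc ‖(⟪K (sQ v.snd), sP v.fst⟫ : ℂ)‖ ≤ ‖K (sQ v.snd)‖ * ‖sP v.fst‖ := norm_inner_le_norm _ _
        _ ≤ ‖sQ v.snd‖ * ‖sP v.fst‖ := by
            apply mul_le_mul_of_nonneg_right _ (norm_nonneg _)
            calc ‖K (sQ v.snd)‖ ≤ ‖K‖ * ‖sQ v.snd‖ := K.le_opNorm _
              _ ≤ 1 * ‖sQ v.snd‖ := mul_le_mul_of_nonneg_right hK (norm_nonneg _)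
              _ = ‖sQ v.snd‖ := one_mul _
    rw [h2]
    have h4 := abs_le.mp (RCLike.abs_re_le_norm (⟪K (sQ v.snd), sP v.fst⟫ : ℂ))
    nlinarith [sq_nonneg (‖sP v.fst‖ - ‖sQ v.snd‖), h4.1, h3]
end

section
/- Let T, X be commuting bounded operators on a Hilbert space H and set T_X = [[T, X], [0, T]]. If p, q are polynomials with q(T) invertible, then p(T_X) q(T_X)⁻¹ = [[f(T), X f'(T)], [0, f(T)]], where f(T) = p(T) q(T)⁻¹ and f'(T) = p'(T) q(T)⁻¹ − p(T) q(T)⁻² q'(T). -/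
variable {H : Type*} [NormedAddCommGroup H] [InnerProductSpace ℂ H] [CompleteSpace H]

open Polynomial
set_option linter.unusedSectionVars false

lemma blk_mul (A B C D A' B' C' D' : H →L[ℂ] H) :
    blk A B C D * blk A' B' C' D' = blk (A*A'+B*C') (A*B'+B*D') (C*A'+D*C') (C*B'+D*D') := by
  ext x <;>
  · simp [blk, ContinuousLinearMap.mul_apply, WithLp.ext_iff, Prod.ext_iff]
    constructor <;> abel

lemma blk_add (A B C D A' B' C' D' : H →L[ℂ] H) :
    blk A B C D + blk A' B' C' D' = blk (A+A') (B+B') (C+C') (D+D') := by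
  ext x <;>
  · simp [blk, WithLp.ext_iff,
      Prod.ext_iff]
    constructor <;> abel

lemma blk_one : blk (1:H→L[ℂ]H) 0 0 1 = 1 := by
  ext x
  show WithLp.toLp 2 ((1:H→L[ℂ]H) x.fst + 0, 0 + (1:H→L[ℂ]H) x.snd) = x
  simp only [ContinuousLinearMap.one_apply, add_zero, zero_add]
  rfl

lemma blk_algebraMap (c : ℂ) :
    blk (algebraMap ℂ (H→L[ℂ]H) c) 0 0 (algebraMap ℂ _ c) = algebraMap ℂ _ c := by
  ext x
  simp [blk, Algebra.algebraMap_eq_smul_one, WithLp.ext_iff, Prod.ext_iff]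

lemma comm_aeval (T X : H→L[ℂ]H) (hc : T * X = X * T) (r : ℂ[X]) :
    Polynomial.aeval T r * X = X * Polynomial.aeval T r := by
  induction r using Polynomial.induction_on with
  | C a => simpa using Algebra.commutes a X
  | add f g hf hg => simp only [map_add, add_mul, mul_add, hf, hg]
  | monomial n a ih =>
      have e : (Polynomial.aeval T) (Polynomial.C a * Polynomial.X ^ (n+1))
          = (Polynomial.aeval T) (Polynomial.C a * Polynomial.X ^ n) * T := by
        rw [pow_succ, ← mul_assoc, map_mul, Polynomial.aeval_X]
      rw [e, mul_assoc, hc, ← mul_assoc, ih, mul_assoc]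

lemma aeval_blk (T X : H→L[ℂ]H) (hc : T * X = X * T) (r : ℂ[X]) :
    Polynomial.aeval (blk T X 0 T) r
      = blk (Polynomial.aeval T r) (X * Polynomial.aeval T (Polynomial.derivative r))
          0 (Polynomial.aeval T r) := by
  induction r using Polynomial.induction_on with
  | C a => simp [blk_algebraMap]
  | add f g hf hg =>
      simp only [map_add, hf, hg, mul_add, blk_add, add_zero]
  | monomial n a ih =>
      have hX : Polynomial.C a * Polynomial.X ^ (n+1)
          = (Polynomial.C a * Polynomial.X ^ n) * Polynomial.X := by ring
      set f := Polynomial.C a * Polynomial.X ^ n with hf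
      have eL : Polynomial.aeval (blk T X 0 T) (f * Polynomial.X)
          = Polynomial.aeval (blk T X 0 T) f * blk T X 0 T := by
        rw [map_mul, Polynomial.aeval_X]
      have eR : Polynomial.aeval T (f * Polynomial.X) = Polynomial.aeval T f * T := by
        rw [map_mul, Polynomial.aeval_X]
      have eD : Polynomial.aeval T (Polynomial.derivative (f * Polynomial.X))
          = Polynomial.aeval T (Polynomial.derivative f) * T + Polynomial.aeval T f := by
        rw [Polynomial.derivative_mul, Polynomial.derivative_X, mul_one, map_add, map_mul,
          Polynomial.aeval_X]
      rw [hX, eL, eR, eD, ih, blk_mul]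
      simp only [mul_zero, zero_mul, add_zero, zero_add]
      congr 1
      rw [mul_add, comm_aeval T X hc, add_comm, mul_assoc]

lemma inv_blk (Q B : H→L[ℂ]H) (hq : IsUnit Q) :
    Ring.inverse (blk Q B 0 Q)
      = blk (Ring.inverse Q) (-(Ring.inverse Q * B * Ring.inverse Q)) 0 (Ring.inverse Q) := by
  have h1 : Q * Ring.inverse Q = 1 := Ring.mul_inverse_cancel _ hq
  have h2 : Ring.inverse Q * Q = 1 := Ring.inverse_mul_cancel _ hq
  set Qi := Ring.inverse Q
  have hv : blk Q B 0 Q * blk Qi (-(Qi * B * Qi)) 0 Qi = 1 := by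
    rw [blk_mul]
    have : Q * -(Qi * B * Qi) + B * Qi = 0 := by
      rw [mul_neg, ← mul_assoc, ← mul_assoc, h1, one_mul, neg_add_cancel]
    simp only [mul_zero, zero_mul, add_zero, zero_add, h1, this]
    exact blk_one
  have hv' : blk Qi (-(Qi * B * Qi)) 0 Qi * blk Q B 0 Q = 1 := by
    rw [blk_mul]
    have : Qi * B + -(Qi * B * Qi) * Q = 0 := by
      rw [neg_mul, mul_assoc, mul_assoc, h2, mul_one, add_neg_cancel]
    simp only [mul_zero, zero_mul, add_zero, zero_add, h2, this]
    exact blk_one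
  let u : (WithLp 2 (H × H) →L[ℂ] WithLp 2 (H × H))ˣ :=
    ⟨blk Q B 0 Q, blk Qi (-(Qi * B * Qi)) 0 Qi, hv, hv'⟩
  exact Ring.inverse_unit u

theorem stmt_19 (T X : H →L[ℂ] H) (hc : T * X = X * T) (p q : Polynomial ℂ)
    (hq : IsUnit (Polynomial.aeval T q)) :
    Polynomial.aeval (blk T X 0 T) p * Ring.inverse (Polynomial.aeval (blk T X 0 T) q) =
      blk (Polynomial.aeval T p * Ring.inverse (Polynomial.aeval T q))
        (X * (Polynomial.aeval T (Polynomial.derivative p) * Ring.inverse (Polynomial.aeval T q) -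
          Polynomial.aeval T p * (Ring.inverse (Polynomial.aeval T q)) ^ 2 *
            Polynomial.aeval T (Polynomial.derivative q)))
        0 (Polynomial.aeval T p * Ring.inverse (Polynomial.aeval T q)) := by
  set P := Polynomial.aeval T p
  set P' := Polynomial.aeval T (Polynomial.derivative p)
  set Q := Polynomial.aeval T q
  set Q' := Polynomial.aeval T (Polynomial.derivative q)
  set Qi := Ring.inverse Q with hQi
  obtain ⟨u, hu⟩ := hq
  -- commutation facts
  have hXQ' : X * Q' = Q' * X := (comm_aeval T X hc _).symm
  have hXP : X * P = P * X := (comm_aeval T X hc _).symm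
  have hTQ : Q * T = T * Q := comm_aeval T T rfl q
  have hPQ : Q * P = P * Q := by
    refine comm_aeval T P ?_ q
    exact (comm_aeval T T rfl p).symm
  have hQ'Q : Q * Q' = Q' * Q := by
    refine comm_aeval T Q' ?_ q
    exact (comm_aeval T T rfl _).symm
  have hXQ : X * Q = Q * X := (comm_aeval T X hc q).symm
  have hXQi : X * Qi = Qi * X := by
    have : Commute X ↑u := by rw [hu]; exact hXQ
    rw [hQi, ← hu, Ring.inverse_unit]
    exact this.units_inv_right
  have hPQi : P * Qi = Qi * P := by
    have : Commute P ↑u := by rw [hu]; exact hPQ.symm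
    rw [hQi, ← hu, Ring.inverse_unit]
    exact this.units_inv_right
  have hQ'Qi : Q' * Qi = Qi * Q' := by
    have : Commute Q' ↑u := by rw [hu]; exact hQ'Q.symm
    rw [hQi, ← hu, Ring.inverse_unit]
    exact this.units_inv_right
  rw [aeval_blk T X hc p, aeval_blk T X hc q, inv_blk _ _ ⟨u, hu⟩, blk_mul]
  simp only [mul_zero, zero_mul, add_zero, zero_add]
  rw [← hQi]
  congr 1
  -- key identity for the top-right entry
  have h1 : Qi * (X * Q') * Qi = X * (Qi * Qi * Q') := by
    calc Qi * (X * Q') * Qi = Qi * X * (Q' * Qi) := by noncomm_ring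
    _ = X * Qi * (Qi * Q') := by rw [← hXQi, hQ'Qi]
    _ = X * (Qi * Qi * Q') := by noncomm_ring
  have h2 : P * (X * (Qi * Qi * Q')) = X * (P * Qi ^ 2 * Q') := by
    calc P * (X * (Qi * Qi * Q')) = P * X * (Qi * Qi * Q') := by noncomm_ring
    _ = X * P * (Qi * Qi * Q') := by rw [← hXP]
    _ = X * (P * Qi ^ 2 * Q') := by rw [sq]; noncomm_ring
  rw [h1, mul_neg, h2, mul_sub]
  noncomm_ring
end
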